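/- arXiv:2001.08373 — 2 statements merged into one kernel-verified Lean document; each statement's English description precedes it below -/
import Mathlib

section
/- Let p be a probability distribution on {0,1}^n with Σ_x p(x)² ≤ α/2^n for some α ≥ 1, let 0 < δ < 1, let 0 < λ ≤ ε < 1, and let c be a real number with c ≥ (1/λ) log(10√α/δ). Then 2^{2n} Σ_{s∈{0,1}^n, |s| > c} (1−ε)^{2|s|} p̂(s)² ≤ δ²/100. -/
/-- Dot product of two bit strings, `s·x = Σ_j s_j x_j`. -/
def dot {n : ℕ} (s x : Fin n → Bool) : ℕ :=
  (Finset.univ.filter fun j => s j && x j).card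

/-- Hamming weight `|s| = Σ_j s_j`. -/
def wt {n : ℕ} (s : Fin n → Bool) : ℕ :=
  (Finset.univ.filter fun j => s j).card

/-- Fourier coefficient `f̂(s) = 2^{-n} Σ_x f(x) (-1)^{s·x}`. -/
noncomputable def fhat {n : ℕ} (f : (Fin n → Bool) → ℝ) (s : Fin n → Bool) : ℝ :=
  (1 / 2 ^ n) * ∑ x, f x * (-1 : ℝ) ^ dot s x

lemma char_prod {n : ℕ} (s x : Fin n → Bool) :
    ((-1 : ℝ)) ^ dot s x = ∏ j, (if s j && x j then (-1 : ℝ) else 1) := by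
  unfold dot
  rw [Finset.card_filter, ← Finset.prod_pow_eq_pow_sum]
  apply Finset.prod_congr rfl
  intro j _
  by_cases h : s j && x j <;> simp [h]

lemma orth {n : ℕ} (x y : Fin n → Bool) :
    ∑ s : Fin n → Bool, ((-1 : ℝ)) ^ dot s x * (-1 : ℝ) ^ dot s y
      = if x = y then (2 : ℝ) ^ n else 0 := by
  have key : ∑ s : Fin n → Bool, ((-1 : ℝ)) ^ dot s x * (-1 : ℝ) ^ dot s y
      = ∏ j, ∑ b : Bool, ((if b && x j then (-1:ℝ) else 1) * (if b && y j then (-1:ℝ) else 1)) := by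
    rw [Finset.prod_univ_sum]
    rw [Fintype.piFinset_univ]
    apply Finset.sum_congr rfl
    intro s _
    rw [char_prod, char_prod, ← Finset.prod_mul_distrib]
  rw [key]
  by_cases hxy : x = y
  · subst hxy
    simp only [if_pos rfl]
    have : ∀ j, ∑ b : Bool, ((if b && x j then (-1:ℝ) else 1) * (if b && x j then (-1:ℝ) else 1)) = 2 := by
      intro j
      cases h : x j <;> simp [h] <;> norm_num
    rw [Finset.prod_congr rfl (fun j _ => this j)]
    simp
  · rw [if_neg hxy]
    obtain ⟨j, hj⟩ : ∃ j, x j ≠ y j := by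
      by_contra h
      push_neg at h
      exact hxy (funext h)
    apply Finset.prod_eq_zero (Finset.mem_univ j)
    cases hx : x j <;> cases hy : y j <;> simp [hx, hy] at hj ⊢


lemma parseval {n : ℕ} (f : (Fin n → Bool) → ℝ) :
    ∑ s : Fin n → Bool, fhat f s ^ 2 = (1 / 2 ^ n) * ∑ x, f x ^ 2 := by
  have expand : ∀ s : Fin n → Bool, fhat f s ^ 2
      = (1 / 2 ^ n) ^ 2 * ∑ x : Fin n → Bool, ∑ y : Fin n → Bool,
          f x * f y * ((-1 : ℝ) ^ dot s x * (-1 : ℝ) ^ dot s y) := by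
    intro s
    rw [fhat, mul_pow]
    congr 1
    rw [sq, Finset.sum_mul_sum]
    apply Finset.sum_congr rfl; intro x _
    apply Finset.sum_congr rfl; intro y _
    ring
  simp only [expand]
  rw [← Finset.mul_sum, Finset.sum_comm]
  have swap2 : ∑ x : Fin n → Bool, ∑ y : Fin n → Bool, ∑ s : Fin n → Bool,
        f x * f y * ((-1 : ℝ) ^ dot s x * (-1 : ℝ) ^ dot s y)
      = ∑ x : Fin n → Bool, ∑ y : Fin n → Bool,
          f x * f y * (if x = y then (2:ℝ)^n else 0) := by
    apply Finset.sum_congr rfl; intro x _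
    apply Finset.sum_congr rfl; intro y _
    rw [← Finset.mul_sum, orth]
  rw [Finset.sum_congr rfl (fun x _ => Finset.sum_comm)]
  rw [swap2]
  simp only [mul_ite, mul_zero, Finset.sum_ite_eq, Finset.mem_univ, if_pos]
  rw [Finset.mul_sum Finset.univ (fun x => f x ^ 2) ((1:ℝ)/2^n), Finset.mul_sum]
  apply Finset.sum_congr rfl; intro x _
  have h2 : (2:ℝ)^n ≠ 0 := by positivity
  field_simp

theorem stmt4 {n : ℕ} (p : (Fin n → Bool) → ℝ) (α δ lam ε c : ℝ)
    (hp0 : ∀ x, 0 ≤ p x) (hp1 : ∑ x, p x = 1)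
    (hα : 1 ≤ α) (hp2 : ∑ x, p x ^ 2 ≤ α / 2 ^ n)
    (hδ0 : 0 < δ) (hδ1 : δ < 1)
    (hlam : 0 < lam) (hlamε : lam ≤ ε) (hε : ε < 1)
    (hc : (1 / lam) * Real.logb 2 (10 * Real.sqrt α / δ) ≤ c) :
    2 ^ (2 * n) *
        ∑ s ∈ Finset.univ.filter (fun s : Fin n → Bool => c < (wt s : ℝ)),
          (1 - ε) ^ (2 * wt s) * fhat p s ^ 2
      ≤ δ ^ 2 / 100 := by
  have hα0 : (0:ℝ) < α := by linarith
  have hsqα : 1 ≤ Real.sqrt α := by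
    rw [show (1:ℝ) = Real.sqrt 1 by simp]
    exact Real.sqrt_le_sqrt hα
  set T : ℝ := 10 * Real.sqrt α / δ with hT
  have hT1 : 1 ≤ T := by
    rw [hT, le_div_iff₀ hδ0]
    nlinarith
  have hT0 : 0 < T := by linarith
  have hlogT : 0 ≤ Real.logb 2 T := Real.logb_nonneg one_lt_two hT1
  have hc0 : 0 ≤ c := le_trans (by positivity) hc
  have hLlc : Real.logb 2 T ≤ lam * c := by
    rw [one_div_mul_eq_div] at hc
    have h := (div_le_iff₀ hlam).mp hc
    linarith
  have hε0 : 0 < 1 - ε := by linarith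
  have hε1 : 1 - ε ≤ 1 := by linarith
  -- base bound : 1 - ε ≤ 2^(-lam)
  have hbase : 1 - ε ≤ (2:ℝ) ^ (-lam : ℝ) := by
    have h2 : (2:ℝ) ^ (-lam : ℝ) = Real.exp (-lam * Real.log 2) := by
      rw [Real.rpow_def_of_pos two_pos, mul_comm]
    have hexp := Real.add_one_le_exp (-lam * Real.log 2)
    have hlog2 : Real.log 2 < 1 := by
      have := Real.log_two_lt_d9; linarith
    have hlog2' : 0 < Real.log 2 := Real.log_pos one_lt_two
    rw [h2]
    nlinarith
  -- term bound
  have hterm : ∀ s ∈ Finset.univ.filter (fun s : Fin n → Bool => c < (wt s : ℝ)),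
      (1 - ε) ^ (2 * wt s) * fhat p s ^ 2
        ≤ (1 - ε) ^ ((2 * c : ℝ)) * fhat p s ^ 2 := by
    intro s hs
    rw [Finset.mem_filter] at hs
    apply mul_le_mul_of_nonneg_right _ (sq_nonneg _)
    rw [← Real.rpow_natCast (1 - ε) (2 * wt s)]
    apply Real.rpow_le_rpow_of_exponent_ge hε0 hε1
    push_cast
    linarith [hs.2]
  have hsum1 : ∑ s ∈ Finset.univ.filter (fun s : Fin n → Bool => c < (wt s : ℝ)),
        (1 - ε) ^ (2 * wt s) * fhat p s ^ 2
      ≤ (1 - ε) ^ ((2 * c : ℝ)) * ∑ s : Fin n → Bool, fhat p s ^ 2 := by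
    calc _ ≤ ∑ s ∈ Finset.univ.filter (fun s : Fin n → Bool => c < (wt s : ℝ)),
              (1 - ε) ^ ((2 * c : ℝ)) * fhat p s ^ 2 := Finset.sum_le_sum hterm
      _ = (1 - ε) ^ ((2 * c : ℝ)) *
            ∑ s ∈ Finset.univ.filter (fun s : Fin n → Bool => c < (wt s : ℝ)),
              fhat p s ^ 2 := (Finset.mul_sum _ _ _).symm
      _ ≤ _ := by
          apply mul_le_mul_of_nonneg_left _ (Real.rpow_nonneg hε0.le _)
          exact Finset.sum_le_sum_of_subset_of_nonneg (Finset.filter_subset _ _)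
            (fun i _ _ => sq_nonneg _)
  have hpar : ∑ s : Fin n → Bool, fhat p s ^ 2 ≤ α / (2 ^ n * 2 ^ n) := by
    rw [parseval]
    rw [div_mul_eq_div_div]
    have h2n : (0:ℝ) < 2 ^ n := by positivity
    calc (1 / 2 ^ n) * ∑ x, p x ^ 2 ≤ (1 / 2 ^ n) * (α / 2 ^ n) := by
          apply mul_le_mul_of_nonneg_left hp2 (by positivity)
      _ = α / 2 ^ n / 2 ^ n := by ring
  -- combine
  have hkey : (2:ℝ) ^ (2 * n) *
        ∑ s ∈ Finset.univ.filter (fun s : Fin n → Bool => c < (wt s : ℝ)),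
          (1 - ε) ^ (2 * wt s) * fhat p s ^ 2
      ≤ α * (1 - ε) ^ ((2 * c : ℝ)) := by
    have h2n : (2:ℝ) ^ (2 * n) = 2 ^ n * 2 ^ n := by
      rw [two_mul, pow_add]
    have hmul : (1 - ε) ^ ((2 * c : ℝ)) * ∑ s : Fin n → Bool, fhat p s ^ 2
        ≤ (1 - ε) ^ ((2 * c : ℝ)) * (α / (2 ^ n * 2 ^ n)) :=
      mul_le_mul_of_nonneg_left hpar (Real.rpow_nonneg hε0.le _)
    have h2npos : (0:ℝ) < 2 ^ n * 2 ^ n := by positivity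
    calc (2:ℝ) ^ (2 * n) * _ ≤ (2:ℝ) ^ (2 * n) * ((1 - ε) ^ ((2 * c : ℝ)) * (α / (2 ^ n * 2 ^ n))) := by
          apply mul_le_mul_of_nonneg_left (le_trans hsum1 hmul) (by positivity)
      _ = α * (1 - ε) ^ ((2 * c : ℝ)) := by
          rw [h2n]; field_simp
  refine le_trans hkey ?_
  -- final analytic bound
  have hstep1 : (1 - ε) ^ ((2 * c : ℝ)) ≤ ((2:ℝ) ^ (-lam : ℝ)) ^ ((2 * c : ℝ)) :=
    Real.rpow_le_rpow hε0.le hbase (by linarith)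
  have hstep2 : ((2:ℝ) ^ (-lam : ℝ)) ^ ((2 * c : ℝ)) = (2:ℝ) ^ ((-lam) * (2 * c)) :=
    (Real.rpow_mul (by norm_num) _ _).symm
  have hstep3 : (2:ℝ) ^ ((-lam) * (2 * c)) ≤ (2:ℝ) ^ ((-2) * Real.logb 2 T) := by
    apply Real.rpow_le_rpow_of_exponent_le one_le_two
    nlinarith
  have hstep4 : (2:ℝ) ^ ((-2 : ℝ) * Real.logb 2 T) = T ^ (-2 : ℝ) := by
    rw [mul_comm, Real.rpow_mul (by norm_num), Real.rpow_logb two_pos (by norm_num) hT0]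
  have hstep5 : T ^ (-2 : ℝ) = δ ^ 2 / (100 * α) := by
    rw [show (-2 : ℝ) = -(2:ℕ) by norm_num, Real.rpow_neg hT0.le, Real.rpow_natCast]
    rw [hT, div_pow]
    rw [mul_pow, Real.sq_sqrt hα0.le]
    rw [inv_div]
    norm_num
  have : α * (1 - ε) ^ ((2 * c : ℝ)) ≤ α * (δ ^ 2 / (100 * α)) := by
    apply mul_le_mul_of_nonneg_left _ hα0.le
    rw [← hstep5, ← hstep4, ← hstep2] at *
    exact le_trans hstep1 (by rw [hstep2]; exact hstep3)
  refine le_trans this (le_of_eq ?_)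
  field_simp
end

section
/- Let p be a probability distribution on {0,1}^n, let q : {0,1}^n → ℝ, and let r be a probability distribution on {0,1}^n such that ||q − r||_1 = 2 Σ_{x∈{0,1}^n : q(x) < 0} |q(x)|. If 0 < δ < 1 and ||p − q||_1 ≤ δ/3, then ||p − r||_1 ≤ δ. -/
/-- The `l1` norm `‖f‖₁ = Σ_x |f(x)|`. -/
noncomputable def l1 {n : ℕ} (f : (Fin n → Bool) → ℝ) : ℝ :=
  ∑ x, |f x|

theorem stmt6 {n : ℕ} (p q r : (Fin n → Bool) → ℝ) (δ : ℝ)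
    (hp0 : ∀ x, 0 ≤ p x) (hp1 : ∑ x, p x = 1)
    (hr0 : ∀ x, 0 ≤ r x) (hr1 : ∑ x, r x = 1)
    (hqr : l1 (fun x => q x - r x)
      = 2 * ∑ x ∈ Finset.univ.filter (fun x : Fin n → Bool => q x < 0), |q x|)
    (hδ0 : 0 < δ) (hδ1 : δ < 1)
    (hpq : l1 (fun x => p x - q x) ≤ δ / 3) :
    l1 (fun x => p x - r x) ≤ δ := by
  have key : ∑ x ∈ Finset.univ.filter (fun x : Fin n → Bool => q x < 0), |q x|
      ≤ l1 (fun x => p x - q x) := by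
    unfold l1
    calc ∑ x ∈ Finset.univ.filter (fun x : Fin n → Bool => q x < 0), |q x|
        ≤ ∑ x ∈ Finset.univ.filter (fun x : Fin n → Bool => q x < 0), |p x - q x| := by
          apply Finset.sum_le_sum
          intro x hx
          have hq : q x < 0 := (Finset.mem_filter.mp hx).2
          rw [abs_of_neg hq, abs_of_pos (by linarith [hp0 x])]
          linarith [hp0 x]
      _ ≤ ∑ x, |p x - q x| := by
          apply Finset.sum_le_sum_of_subset_of_nonneg (Finset.filter_subset _ _)
          intro x _ _; exact abs_nonneg _
  have tri : l1 (fun x => p x - r x) ≤ l1 (fun x => p x - q x) + l1 (fun x => q x - r x) := by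
    unfold l1
    rw [← Finset.sum_add_distrib]
    apply Finset.sum_le_sum
    intro x _

    have : p x - r x = (p x - q x) + (q x - r x) := by ring
    show |p x - r x| ≤ |p x - q x| + |q x - r x|
    rw [this]; exact abs_add_le _ _
  linarith
end
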